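/- Let a, b₁, b₂, γ be positive reals and c, τ real parameters. Then λ = 0 is a root of Δ_{c,τ} if and only if c²b₁b₂ = (ab₁+γ)(ab₂+γ). Moreover, if c²b₁b₂ = (ab₁+γ)(ab₂+γ), then λ = 0 is a simple root of Δ_{c,τ} (i.e. the λ-derivative of Δ_{c,τ} at 0 is nonzero) if and only if τ ≠ (b₁+b₂)/(2b₁b₂) − (a+b₁)/(2(γ+ab₁)) − (a+b₂)/(2(γ+ab₂)). -/

import Mathlib

noncomputable section

open Real

/-- A = b₁+b₂+2a -/
def Ac (a b1 b2 : ℝ) : ℝ := b1 + b2 + 2*a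
/-- B = 2a(b₁+b₂)+a²+b₁b₂+2γ -/
def Bc (a b1 b2 γ : ℝ) : ℝ := 2*a*(b1+b2) + a^2 + b1*b2 + 2*γ
/-- C = (a+b₁)(ab₂+γ)+(a+b₂)(ab₁+γ) -/
def Cc (a b1 b2 γ : ℝ) : ℝ := (a+b1)*(a*b2+γ) + (a+b2)*(a*b1+γ)
/-- D = (ab₁+γ)(ab₂+γ) -/
def Dc (a b1 b2 γ : ℝ) : ℝ := (a*b1+γ)*(a*b2+γ)
/-- P = A² − 2B -/
def Pc (a b1 b2 γ : ℝ) : ℝ := (Ac a b1 b2)^2 - 2*(Bc a b1 b2 γ)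
/-- Q = B² + 2D − 2AC − c⁴ -/
def Qc (a b1 b2 γ c : ℝ) : ℝ :=
  (Bc a b1 b2 γ)^2 + 2*(Dc a b1 b2 γ) - 2*(Ac a b1 b2)*(Cc a b1 b2 γ) - c^4
/-- R = C² − 2BD − c⁴(b₁²+b₂²) -/
def Rc (a b1 b2 γ c : ℝ) : ℝ :=
  (Cc a b1 b2 γ)^2 - 2*(Bc a b1 b2 γ)*(Dc a b1 b2 γ) - c^4*(b1^2+b2^2)
/-- S = D² − c⁴b₁²b₂² -/
def Sc (a b1 b2 γ c : ℝ) : ℝ := (Dc a b1 b2 γ)^2 - c^4*b1^2*b2^2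
/-- h(z) = z⁴ + Pz³ + Qz² + Rz + S -/
def hq (a b1 b2 γ c z : ℝ) : ℝ :=
  z^4 + Pc a b1 b2 γ*z^3 + Qc a b1 b2 γ c*z^2 + Rc a b1 b2 γ c*z + Sc a b1 b2 γ c
/-- h′(z) = 4z³ + 3Pz² + 2Qz + R -/
def hq' (a b1 b2 γ c z : ℝ) : ℝ :=
  4*z^3 + 3*(Pc a b1 b2 γ)*z^2 + 2*(Qc a b1 b2 γ c)*z + Rc a b1 b2 γ c
/-- The characteristic function Δ_{c,τ}(λ) of the linearization at the trivial equilibrium. -/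
def charFun (a b1 b2 γ c τ : ℝ) (lam : ℂ) : ℂ :=
  (lam^2 + (a+b1 : ℝ)*lam + (a*b1+γ : ℝ)) * (lam^2 + (a+b2 : ℝ)*lam + (a*b2+γ : ℝ))
    - (c^2 : ℝ) * (lam + (b1 : ℝ)) * (lam + (b2 : ℝ)) * Complex.exp ((-2) * lam * (τ : ℝ))
/-- N(ω) = c²[(b₁+b₂)²ω² + (ω²−b₁b₂)²] -/
def Nfun (b1 b2 c ω : ℝ) : ℝ := c^2*((b1+b2)^2*ω^2 + (ω^2 - b1*b2)^2)
/-- a*(ω) -/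
def aStar (a b1 b2 γ c ω : ℝ) : ℝ :=
  ((ω^4 - Bc a b1 b2 γ*ω^2 + Dc a b1 b2 γ)*(b1+b2)*ω
    + (Ac a b1 b2*ω^3 - Cc a b1 b2 γ*ω)*(b1*b2 - ω^2)) / Nfun b1 b2 c ω
/-- b*(ω) -/
def bStar (a b1 b2 γ c ω : ℝ) : ℝ :=
  ((ω^4 - Bc a b1 b2 γ*ω^2 + Dc a b1 b2 γ)*(b1*b2 - ω^2)
    + (-(Ac a b1 b2)*ω^3 + Cc a b1 b2 γ*ω)*(b1+b2)*ω) / Nfun b1 b2 c ω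
/-- the critical delays τ^{(j)}(ω) -/
def tauJ (a b1 b2 γ c : ℝ) (j : ℕ) (ω : ℝ) : ℝ :=
  if 0 ≤ aStar a b1 b2 γ c ω then
    (1/(2*ω)) * (Real.arccos (bStar a b1 b2 γ c ω) + 2*(j:ℝ)*Real.pi)
  else
    (1/(2*ω)) * (2*Real.pi - Real.arccos (bStar a b1 b2 γ c ω) + 2*(j:ℝ)*Real.pi)

/-- λ = 0 is a root of Δ_{c,τ} iff c²b₁b₂ = (ab₁+γ)(ab₂+γ); in that case
it is a simple root iff τ ≠ (b₁+b₂)/(2b₁b₂) − (a+b₁)/(2(γ+ab₁)) − (a+b₂)/(2(γ+ab₂)). -/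
theorem stmt10 (a b1 b2 γ c τ : ℝ)
    (ha : 0 < a) (hb1 : 0 < b1) (hb2 : 0 < b2) (hγ : 0 < γ) :
    (charFun a b1 b2 γ c τ 0 = 0 ↔ c^2*b1*b2 = (a*b1+γ)*(a*b2+γ)) ∧
    (c^2*b1*b2 = (a*b1+γ)*(a*b2+γ) →
      (deriv (charFun a b1 b2 γ c τ) 0 ≠ 0 ↔
        τ ≠ (b1+b2)/(2*b1*b2) - (a+b1)/(2*(γ+a*b1)) - (a+b2)/(2*(γ+a*b2)))) := by
  have h0 : charFun a b1 b2 γ c τ 0 = (((a*b1+γ)*(a*b2+γ) - c^2*b1*b2 : ℝ) : ℂ) := by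
    simp only [charFun]
    push_cast
    simp [Complex.exp_zero]
  constructor
  · rw [h0, Complex.ofReal_eq_zero, sub_eq_zero]
    exact eq_comm
  · intro hD
    -- derivative computation
    have e1 : HasDerivAt (fun lam : ℂ => lam^2 + ((a+b1:ℝ):ℂ)*lam + ((a*b1+γ:ℝ):ℂ))
        (((a+b1:ℝ):ℂ)) 0 := by
      have h := ((hasDerivAt_pow 2 (0:ℂ)).add
        ((hasDerivAt_id (0:ℂ)).const_mul ((a+b1:ℝ):ℂ))).add_const ((a*b1+γ:ℝ):ℂ)
      exact h.congr_deriv (by simp)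
    have e2 : HasDerivAt (fun lam : ℂ => lam^2 + ((a+b2:ℝ):ℂ)*lam + ((a*b2+γ:ℝ):ℂ))
        (((a+b2:ℝ):ℂ)) 0 := by
      have h := ((hasDerivAt_pow 2 (0:ℂ)).add
        ((hasDerivAt_id (0:ℂ)).const_mul ((a+b2:ℝ):ℂ))).add_const ((a*b2+γ:ℝ):ℂ)
      exact h.congr_deriv (by simp)
    have e3 : HasDerivAt (fun lam : ℂ => Complex.exp ((-2) * lam * ((τ:ℝ):ℂ)))
        ((-2)*((τ:ℝ):ℂ)) 0 := by
      have hg : HasDerivAt (fun lam : ℂ => (-2) * lam * ((τ:ℝ):ℂ)) ((-2)*((τ:ℝ):ℂ)) 0 := by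
        simpa using ((hasDerivAt_id (0:ℂ)).const_mul (-2:ℂ)).mul_const ((τ:ℝ):ℂ)
      simpa [Complex.exp_zero] using hg.cexp
    have eg : HasDerivAt (fun lam : ℂ => ((c^2:ℝ):ℂ)*(lam+((b1:ℝ):ℂ))*(lam+((b2:ℝ):ℂ)))
        (((c^2:ℝ):ℂ)*(((b1:ℝ):ℂ)+((b2:ℝ):ℂ))) 0 := by
      have h := (((hasDerivAt_id (0:ℂ)).add_const ((b1:ℝ):ℂ)).const_mul ((c^2:ℝ):ℂ)).mul
        ((hasDerivAt_id (0:ℂ)).add_const ((b2:ℝ):ℂ))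
      exact h.congr_deriv (by simp; ring)
    have HD : HasDerivAt (charFun a b1 b2 γ c τ)
        (((a+b1)*(a*b2+γ)+(a+b2)*(a*b1+γ) - c^2*(b1+b2) + 2*c^2*b1*b2*τ : ℝ) : ℂ) 0 := by
      have h := (e1.mul e2).sub (eg.mul e3)
      exact h.congr_deriv (by simp [Complex.exp_zero]; ring)
    rw [HD.deriv, Ne, Ne, Complex.ofReal_eq_zero]
    have hb1' : b1 ≠ 0 := hb1.ne'
    have hb2' : b2 ≠ 0 := hb2.ne'
    have hg1 : γ + a*b1 ≠ 0 := by positivity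
    have hg2 : γ + a*b2 ≠ 0 := by positivity
    have hDpos : (0:ℝ) < (a*b1+γ)*(a*b2+γ) := by positivity
    have key : ((a+b1)*(a*b2+γ)+(a+b2)*(a*b1+γ) - c^2*(b1+b2) + 2*c^2*b1*b2*τ)
        = 2*((a*b1+γ)*(a*b2+γ))*(τ - ((b1+b2)/(2*b1*b2) - (a+b1)/(2*(γ+a*b1)) - (a+b2)/(2*(γ+a*b2)))) := by
      have hc2 : c^2 = (a*b1+γ)*(a*b2+γ)/(b1*b2) := by
        field_simp
        linarith [hD]
      rw [hc2]
      field_simp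
      ring
    rw [key]
    constructor
    · intro h htau
      exact h (by rw [htau]; ring)
    · intro h hz
      rcases mul_eq_zero.mp hz with h1 | h2
      · exact absurd h1 (by positivity)
      · exact h (by linarith [sub_eq_zero.mp h2])
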